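/- For every Lindelöf topological space X (no separation axioms needed), F(X) ≤ t(X): every free sequence in a Lindelöf space has cardinality at most the tightness of X. -/

import Mathlib

open Cardinal Set TopologicalSpace

universe u

/-- A transfinite sequence indexed by a linearly ordered type is *free* if for every index `i`,
the closure of the initial segment `{x j : j < i}` is disjoint from the closure of the
final segment `{x j : i ≤ j}`. -/
def IsFreeSeq {X : Type u} [TopologicalSpace X] {ι : Type u} [LinearOrder ι] (x : ι → X) :
    Prop :=
  ∀ i : ι, closure (x '' {j | j < i}) ∩ closure (x '' {j | i ≤ j}) = ∅

/-- `F(X)`: the supremum (together with `ℵ₀`) of the cardinalities (= lengths) of free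
sequences in `X`, free sequences being indexed by ordinals. -/
noncomputable def freeSup (X : Type u) [TopologicalSpace X] : Cardinal.{u} :=
  ℵ₀ ⊔ sSup {c : Cardinal.{u} |
    ∃ (o : Ordinal.{u}) (x : o.ToType → X), IsFreeSeq x ∧ c = o.card}

/-- The Lindelöf degree `L(X)`: the least infinite cardinal `κ` such that every open cover
of `X` has a subcover of size at most `κ`. -/
noncomputable def LindelofDeg (X : Type u) [TopologicalSpace X] : Cardinal.{u} :=
  sInf {κ : Cardinal.{u} | ℵ₀ ≤ κ ∧ ∀ U : Set (Set X), (∀ u ∈ U, IsOpen u) →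
    ⋃₀ U = Set.univ → ∃ V ⊆ U, #V ≤ κ ∧ ⋃₀ V = Set.univ}

/-- The tightness `t(X)`: the least infinite cardinal `κ` such that whenever `p ∈ closure A`
there is `B ⊆ A` with `|B| ≤ κ` and `p ∈ closure B`. -/
noncomputable def tightnessCard (X : Type u) [TopologicalSpace X] : Cardinal.{u} :=
  sInf {κ : Cardinal.{u} | ℵ₀ ≤ κ ∧ ∀ (A : Set X) (p : X), p ∈ closure A →
    ∃ B ⊆ A, #B ≤ κ ∧ p ∈ closure B}

/-- The set-tightness `t_s(X)`: the least infinite cardinal `κ` such that for every non-closed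
`A` and `p ∈ closure A \ A` there is a `≤ κ`-sized family of subsets of `A` whose union has
`p` in its closure while no member does. -/
noncomputable def setTightness (X : Type u) [TopologicalSpace X] : Cardinal.{u} :=
  sInf {κ : Cardinal.{u} | ℵ₀ ≤ κ ∧ ∀ (A : Set X) (p : X), p ∈ closure A \ A →
    ∃ (ι : Type u) (B : ι → Set X), #ι ≤ κ ∧ (∀ i, B i ⊆ A) ∧
      p ∈ closure (⋃ i, B i) ∧ ∀ i, p ∉ closure (B i)}

/-- A transfinite sequence `x` converges to `p` if every open neighbourhood of `p` contains
a final segment of the sequence. -/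
def ConvergesTo {X : Type u} [TopologicalSpace X] {ι : Type u} [LinearOrder ι]
    (x : ι → X) (p : X) : Prop :=
  ∀ V : Set X, IsOpen V → p ∈ V → ∃ b : ι, ∀ a : ι, b ≤ a → x a ∈ V

/-- A sequence converging to `p` is *thin* if `p` is not in the closure of any proper
initial segment. -/
def IsThin {X : Type u} [TopologicalSpace X] {ι : Type u} [LinearOrder ι]
    (x : ι → X) (p : X) : Prop :=
  ∀ i : ι, p ∉ closure (x '' {j | j < i})

/-- `X` is pseudoradial if every non-closed set contains a transfinite sequence converging
to a point of its closure outside of it. -/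
def IsPseudoradial (X : Type u) [TopologicalSpace X] : Prop :=
  ∀ A : Set X, ¬ IsClosed A → ∃ p ∈ closure A \ A, ∃ (o : Ordinal.{u}) (x : o.ToType → X),
    (∀ i, x i ∈ A) ∧ ConvergesTo x p

/-- `X` is almost radial if every non-closed set contains a thin transfinite sequence
converging to a point of its closure outside of it. -/
def IsAlmostRadial (X : Type u) [TopologicalSpace X] : Prop :=
  ∀ A : Set X, ¬ IsClosed A → ∃ p ∈ closure A \ A, ∃ (o : Ordinal.{u}) (x : o.ToType → X),
    (∀ i, x i ∈ A) ∧ ConvergesTo x p ∧ IsThin x p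

/-- `X` is radial if for every non-closed set `A` and every point `p ∈ closure A \ A` there is
a transfinite sequence in `A` converging to `p`. -/
def IsRadial (X : Type u) [TopologicalSpace X] : Prop :=
  ∀ A : Set X, ¬ IsClosed A → ∀ p ∈ closure A \ A, ∃ (o : Ordinal.{u}) (x : o.ToType → X),
    (∀ i, x i ∈ A) ∧ ConvergesTo x p

/-- The radial character `σ_C(X)`: the least infinite cardinal `κ` such that every non-closed
set contains a thin transfinite sequence of length at most `κ` converging outside. -/
noncomputable def radialChar (X : Type u) [TopologicalSpace X] : Cardinal.{u} :=
  sInf {κ : Cardinal.{u} | ℵ₀ ≤ κ ∧ ∀ A : Set X, ¬ IsClosed A →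
    ∃ p ∈ closure A \ A, ∃ (o : Ordinal.{u}) (x : o.ToType → X),
      o.card ≤ κ ∧ (∀ i, x i ∈ A) ∧ ConvergesTo x p ∧ IsThin x p}

/-- The `G_δ`-modification of the topology of `X`: the topology generated by the countable
intersections of open sets. -/
def GdeltaTop (X : Type u) [TopologicalSpace X] : TopologicalSpace X :=
  generateFrom {s : Set X | ∃ f : ℕ → Set X, (∀ n, IsOpen (f n)) ∧ s = ⋂ n, f n}


private lemma free_seq_aux {X : Type u} [TopologicalSpace X] [LindelofSpace X]
    {κ : Cardinal.{u}} (hκ1 : ℵ₀ ≤ κ)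
    (hκ2 : ∀ (A : Set X) (p : X), p ∈ closure A → ∃ B ⊆ A, #B ≤ κ ∧ p ∈ closure B)
    {ι : Type u} [LinearOrder ι] (x : ι → X) (hfree : IsFreeSeq x)
    (hub : ∀ S : Set ι, #S ≤ κ → ∃ b : ι, ∀ a ∈ S, a < b) : False := by
  set F : ι → Set X := fun i => closure (x '' {j | i ≤ j}) with hF
  have hex : ∃ p : X, ∀ i, p ∈ F i := by
    by_contra h
    push_neg at h
    have hcov : (univ : Set X) ⊆ ⋃ i, (F i)ᶜ := fun p _ => by
      obtain ⟨i, hi⟩ := h p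
      exact mem_iUnion.2 ⟨i, hi⟩
    obtain ⟨t, htc, hts⟩ := isLindelof_univ.elim_countable_subcover (fun i => (F i)ᶜ)
      (fun i => isClosed_closure.isOpen_compl) hcov
    have htκ : #t ≤ κ := le_trans (Cardinal.mk_le_aleph0_iff.mpr htc.to_subtype) hκ1
    obtain ⟨b, hb⟩ := hub t htκ
    have hxb := hts (mem_univ (x b))
    simp only [mem_iUnion] at hxb
    obtain ⟨i, hit, hxbi⟩ := hxb
    exact hxbi (subset_closure ⟨b, (hb i hit).le, rfl⟩)
  obtain ⟨p, hp⟩ := hex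
  obtain ⟨i₀⟩ : Nonempty ι := by
    obtain ⟨b, -⟩ := hub ∅ (by simp)
    exact ⟨b⟩
  have hpcl : p ∈ closure (range x) :=
    closure_mono (image_subset_range _ _) (hp i₀)
  obtain ⟨B, hBsub, hBcard, hpB⟩ := hκ2 (range x) p hpcl
  choose f hf using fun y : B => hBsub y.2
  obtain ⟨b, hb⟩ := hub (range f) (Cardinal.mk_range_le.trans hBcard)
  have hBsub' : B ⊆ x '' {j | j < b} := by
    rintro y hy
    exact ⟨f ⟨y, hy⟩, hb _ (mem_range_self _), hf ⟨y, hy⟩⟩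
  have h1 : p ∈ closure (x '' {j | j < b}) := closure_mono hBsub' hpB
  have h2 : p ∈ (∅ : Set X) := hfree b ▸ mem_inter h1 (hp b)
  exact h2

/-- in a Lindelöf space, `F(X) ≤ t(X)`. -/
theorem freeSup_le_tightness {X : Type u} [TopologicalSpace X] [LindelofSpace X] :
    freeSup X ≤ tightnessCard X := by
  set κ := tightnessCard X with hκdef
  have hmem : κ ∈ {κ : Cardinal.{u} | ℵ₀ ≤ κ ∧ ∀ (A : Set X) (p : X), p ∈ closure A →
      ∃ B ⊆ A, #B ≤ κ ∧ p ∈ closure B} :=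
    csInf_mem ⟨max ℵ₀ #X, le_max_left _ _, fun A p hp =>
      ⟨A, Subset.rfl, le_trans (Cardinal.mk_set_le A) (le_max_right _ _), hp⟩⟩
  obtain ⟨hκ1, hκ2⟩ := hmem
  rw [freeSup]
  refine sup_le hκ1 (csSup_le' ?_)
  rintro c ⟨o, x, hfree, rfl⟩
  haveI : IsWellOrder o.ToType (· < ·) := isWellOrder_lt
  by_contra hcon
  push_neg at hcon
  set μ := Order.succ κ with hμ
  have hord : μ.ord ≤ o := Cardinal.ord_le.mpr (Order.succ_le_of_lt hcon)
  have hμ0 : ℵ₀ ≤ μ := hκ1.trans (Order.le_succ κ)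
  set ι := {j : o.ToType // Ordinal.typein (α := o.ToType) (· < ·) j < μ.ord} with hι
  have hfree' : IsFreeSeq (fun j : ι => x j.1) := by
    intro i
    rw [← subset_empty_iff, ← hfree i.1]
    refine inter_subset_inter (closure_mono ?_) (closure_mono ?_)
    · rintro _ ⟨j, hj, rfl⟩
      exact ⟨j.1, hj, rfl⟩
    · rintro _ ⟨j, hj, rfl⟩
      exact ⟨j.1, hj, rfl⟩
  have hub : ∀ S : Set ι, #S ≤ κ → ∃ b : ι, ∀ a ∈ S, a < b := by
    intro S hS
    set g : S → Ordinal.{u} := fun a => Ordinal.typein (α := o.ToType) (· < ·) a.1.1 with hg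
    have hsup : iSup g < μ.ord :=
      Cardinal.iSup_lt_ord_of_isRegular (Cardinal.isRegular_succ hκ1)
        (hS.trans_lt (Order.lt_succ κ)) (fun a => a.1.2)
    have hlim : Order.IsSuccLimit μ.ord := Cardinal.isSuccLimit_ord hμ0
    have hsucc : Order.succ (iSup g) < μ.ord := hlim.succ_lt hsup
    have hlt : Order.succ (iSup g) < Ordinal.type (α := o.ToType) (· < ·) := by
      rw [Ordinal.type_toType]
      exact hsucc.trans_le hord
    set b0 : o.ToType := Ordinal.enum (· < ·) ⟨Order.succ (iSup g), hlt⟩ with hb0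
    have htyb0 : Ordinal.typein (α := o.ToType) (· < ·) b0 = Order.succ (iSup g) :=
      Ordinal.typein_enum _ _
    refine ⟨⟨b0, by rw [htyb0]; exact hsucc⟩, fun a ha => ?_⟩
    have h1 : g ⟨a, ha⟩ ≤ iSup g := Ordinal.le_iSup g ⟨a, ha⟩
    have h2 : Ordinal.typein (α := o.ToType) (· < ·) a.1 <
        Ordinal.typein (α := o.ToType) (· < ·) b0 := by
      rw [htyb0]
      exact h1.trans_lt (Order.lt_succ _)
    exact Subtype.mk_lt_mk.mpr ((Ordinal.typein_lt_typein _).mp h2)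
  exact absurd (free_seq_aux hκ1 hκ2 _ hfree' hub) (fun h => h)
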